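/- arXiv:1511.01115 — 7 statements merged into one kernel-verified Lean document; each statement's English description precedes it below -/
import Mathlib

section
/- Let n ≥ 1 and let λ_0, …, λ_n and μ_0, …, μ_n be two families of vectors in the Euclidean space ℝ^n, each satisfying ⟨λ_k, λ_l⟩ = 1 (resp. ⟨μ_k, μ_l⟩ = 1) if k = l and = −1/n if k ≠ l. Then there exists a linear isometric automorphism A of ℝ^n such that A λ_k = μ_k for all 0 ≤ k ≤ n. -/
open Finset

private lemma gram_row_sum {n : ℕ} (hn : 1 ≤ n) (l : Fin (n + 1)) :
    ∑ k : Fin (n + 1), (if k = l then (1 : ℝ) else -1 / n) = 0 := by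
  have hn' : (n : ℝ) ≠ 0 := Nat.cast_ne_zero.mpr (by omega)
  calc ∑ k : Fin (n + 1), (if k = l then (1 : ℝ) else -1 / n)
      = ∑ k : Fin (n + 1), ((if k = l then (1 : ℝ) + 1 / n else 0) + (-1 / n)) := by
        refine Finset.sum_congr rfl fun k _ => ?_
        split <;> ring
    _ = (1 + 1 / n) + (n + 1) * (-1 / n) := by
        rw [Finset.sum_add_distrib, Finset.sum_ite_eq' Finset.univ l, Finset.sum_const,
          card_univ, Fintype.card_fin]
        simp [nsmul_eq_mul]
    _ = 0 := by field_simp; ring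

private lemma gram_sum_zero {n : ℕ} (hn : 1 ≤ n)
    (lam : Fin (n + 1) → EuclideanSpace ℝ (Fin n))
    (hlam : ∀ k l : Fin (n + 1),
      (inner ℝ (lam k) (lam l) : ℝ) = if k = l then 1 else -1 / (n : ℝ)) :
    ∑ k, lam k = 0 := by
  rw [← inner_self_eq_zero (𝕜 := ℝ)]
  rw [inner_sum]
  simp only [sum_inner, hlam]
  exact Finset.sum_eq_zero fun l _ => gram_row_sum hn l

private lemma gram_li {n : ℕ} (hn : 1 ≤ n)
    (lam : Fin (n + 1) → EuclideanSpace ℝ (Fin n))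
    (hlam : ∀ k l : Fin (n + 1),
      (inner ℝ (lam k) (lam l) : ℝ) = if k = l then 1 else -1 / (n : ℝ)) :
    LinearIndependent ℝ (fun i : Fin n => lam i.succ) := by
  have hn' : (n : ℝ) ≠ 0 := Nat.cast_ne_zero.mpr (by omega)
  rw [Fintype.linearIndependent_iff]
  intro g hg
  set S := ∑ i, g i with hS
  have key : ∀ j : Fin n, g j * (1 + 1 / n) - S / n = 0 := by
    intro j
    have h0 : (inner ℝ (∑ i, g i • lam i.succ) (lam j.succ) : ℝ) = 0 := by
      rw [hg, inner_zero_left]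
    rw [sum_inner] at h0
    simp only [real_inner_smul_left, hlam, Fin.succ_inj] at h0
    calc g j * (1 + 1 / n) - S / n
        = ∑ i, g i * (if i = j then (1 : ℝ) else -1 / n) := by
          rw [hS]
          rw [show (∑ i, g i * (if i = j then (1 : ℝ) else -1 / n))
              = ∑ i, ((if i = j then g i * (1 + 1 / n) else 0) + g i * (-1 / n)) from
            Finset.sum_congr rfl fun i _ => by split <;> simp_all <;> ring]
          rw [Finset.sum_add_distrib, Finset.sum_ite_eq' Finset.univ j, ← Finset.sum_mul]
          simp
          ring
      _ = 0 := h0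
  have hSz : S = 0 := by
    have h1 : S * (1 + 1 / n) - n * (S / n) = 0 := by
      calc S * (1 + 1 / n) - n * (S / n)
          = ∑ j : Fin n, (g j * (1 + 1 / n) - S / n) := by
            rw [Finset.sum_sub_distrib, ← Finset.sum_mul, Finset.sum_const, card_univ,
              Fintype.card_fin, nsmul_eq_mul, ← hS]
        _ = 0 := Finset.sum_eq_zero fun j _ => key j
    rw [mul_div_cancel₀ _ hn'] at h1
    have h2 : S / (n : ℝ) = 0 := by
      have h3 : S * (1 + 1 / n) - S = S / n := by field_simp; ring
      linarith
    exact (div_eq_zero_iff.mp h2).resolve_right hn'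
  intro j
  have := key j
  rw [hSz] at this
  have hpos : (1 : ℝ) + 1 / n > 0 := by positivity
  rw [zero_div, sub_zero] at this
  rcases mul_eq_zero.mp this with h | h
  · exact h
  · linarith

/-- Any two families of `n+1` unit vectors in `ℝ^n` symmetric about the origin
are related by a linear isometric automorphism of `ℝ^n`. -/
theorem exists_isometry_mapping_symmetric_unit_vectors (n : ℕ) (hn : 1 ≤ n)
    (lam mu : Fin (n + 1) → EuclideanSpace ℝ (Fin n))
    (hlam : ∀ k l : Fin (n + 1),
      (inner ℝ (lam k) (lam l) : ℝ) = if k = l then 1 else -1 / (n : ℝ))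
    (hmu : ∀ k l : Fin (n + 1),
      (inner ℝ (mu k) (mu l) : ℝ) = if k = l then 1 else -1 / (n : ℝ)) :
    ∃ A : EuclideanSpace ℝ (Fin n) ≃ₗᵢ[ℝ] EuclideanSpace ℝ (Fin n),
      ∀ k : Fin (n + 1), A (lam k) = mu k := by
  haveI : Nonempty (Fin n) := ⟨⟨0, by omega⟩⟩
  have li_lam := gram_li hn lam hlam
  have li_mu := gram_li hn mu hmu
  have hcard : Fintype.card (Fin n) = Module.finrank ℝ (EuclideanSpace ℝ (Fin n)) := by
    simp [finrank_euclideanSpace_fin]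
  let blam := basisOfLinearIndependentOfCardEqFinrank li_lam hcard
  let bmu := basisOfLinearIndependentOfCardEqFinrank li_mu hcard
  have hblam : ∀ i, blam i = lam i.succ := fun i => by
    simp [blam, coe_basisOfLinearIndependentOfCardEqFinrank]
  have hbmu : ∀ i, bmu i = mu i.succ := fun i => by
    simp [bmu, coe_basisOfLinearIndependentOfCardEqFinrank]
  let f := blam.equiv bmu (Equiv.refl _)
  have hf : ∀ i, f (blam i) = bmu i := fun i => by
    simp [f, Module.Basis.equiv_apply]
  have hB : ((innerₗ (EuclideanSpace ℝ (Fin n))).compl₁₂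
        (f : EuclideanSpace ℝ (Fin n) →ₗ[ℝ] EuclideanSpace ℝ (Fin n))
        (f : EuclideanSpace ℝ (Fin n) →ₗ[ℝ] EuclideanSpace ℝ (Fin n)))
      = innerₗ (EuclideanSpace ℝ (Fin n)) := by
    apply LinearMap.ext_basis blam blam
    intro i j
    simp only [LinearMap.compl₁₂_apply, LinearEquiv.coe_coe, hf]
    rw [show (innerₗ _ (bmu i)) (bmu j) = (inner ℝ (bmu i) (bmu j) : ℝ) from rfl,
      show (innerₗ _ (blam i)) (blam j) = (inner ℝ (blam i) (blam j) : ℝ) from rfl,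
      hbmu, hbmu, hblam, hblam, hmu, hlam]
  have hinner : ∀ x y : EuclideanSpace ℝ (Fin n), (inner ℝ (f x) (f y) : ℝ) = inner ℝ x y := by
    intro x y
    exact LinearMap.congr_fun (LinearMap.congr_fun hB x) y
  refine ⟨f.isometryOfInner hinner, ?_⟩
  have hA : ∀ i : Fin n, (f.isometryOfInner hinner) (lam i.succ) = mu i.succ := by
    intro i
    rw [LinearEquiv.coe_isometryOfInner, ← hblam, hf, hbmu]
  intro k
  refine Fin.cases ?_ (fun i => hA i) k
  have hl0 : lam 0 = -∑ i : Fin n, lam i.succ := by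
    have h := gram_sum_zero hn lam hlam
    rw [Fin.sum_univ_succ] at h
    exact eq_neg_of_add_eq_zero_left h
  have hm0 : mu 0 = -∑ i : Fin n, mu i.succ := by
    have h := gram_sum_zero hn mu hmu
    rw [Fin.sum_univ_succ] at h
    exact eq_neg_of_add_eq_zero_left h
  rw [hl0, map_neg, map_sum, hm0]
  congr 1
  exact Finset.sum_congr rfl fun i _ => hA i
end

section
/- Let λ_0, …, λ_4 be quaternions with ⟨λ_k, λ_l⟩ = 1 if k = l and −1/4 if k ≠ l, and define F : ℂ^5 × ℍ × ℍ → ℍ by F(Z, V, W) = 2 ∑_{k=0}^{4} |Z_k|² λ_k + V W. Then at every point (Z, V, W) ≠ (0, 0, 0) with F(Z, V, W) = 0, the Fréchet derivative of F over ℝ is a surjective ℝ-linear map onto ℍ. -/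
open Quaternion

section Aux

private theorem coeff_eq' (n : ℕ) (g : Fin n → ℝ)
    (h : ∀ l, ∑ k, g k * (if k = l then (1:ℝ) else -1/4) = 0) :
    ∀ l, 5 * g l = ∑ k, g k := by
  intro l
  have := h l
  have e : ∀ k : Fin n, g k * (if k = l then (1:ℝ) else -1/4)
      = (5/4) * (if k = l then g k else 0) - (1/4) * g k := by
    intro k; split <;> ring
  rw [Finset.sum_congr rfl (fun k _ => e k), Finset.sum_sub_distrib, ← Finset.mul_sum,
    ← Finset.mul_sum, Finset.sum_ite_eq' Finset.univ l g, if_pos (Finset.mem_univ l)] at this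
  linarith

private theorem inner_lam' (lam : Fin 5 → Quaternion ℝ)
    (hlam : ∀ k l : Fin 5, (star (lam k) * lam l).re = if k = l then 1 else -1 / 4)
    (k l : Fin 5) : (inner ℝ (lam k) (lam l)) = if k = l then 1 else -1/4 := by
  rw [Quaternion.inner_def]
  rw [show (lam k * star (lam l)).re = (star (lam l) * lam k).re by
    simp [Quaternion.re_mul]; ring]
  rw [hlam l k]
  simp [eq_comm]

private theorem rel_of_comb' (lam : Fin 5 → Quaternion ℝ)
    (hlam : ∀ k l : Fin 5, (star (lam k) * lam l).re = if k = l then 1 else -1 / 4)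
    (c : Fin 5 → ℝ) (h0 : ∑ k, c k • lam k = 0) :
    ∀ l, 5 * c l = ∑ k, c k := by
  apply coeff_eq'
  intro l
  have h1 : (inner ℝ (∑ k, c k • lam k) (lam l)) = 0 := by rw [h0]; simp
  rw [sum_inner] at h1
  rw [← h1]
  apply Finset.sum_congr rfl
  intro k _
  rw [real_inner_smul_left, inner_lam' lam hlam]

private theorem lam_span' (lam : Fin 5 → Quaternion ℝ)
    (hlam : ∀ k l : Fin 5, (star (lam k) * lam l).re = if k = l then 1 else -1 / 4) :
    Submodule.span ℝ (Set.range (fun i : Fin 4 => lam i.castSucc)) = ⊤ := by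
  have hind : LinearIndependent ℝ (fun i : Fin 4 => lam i.castSucc) := by
    rw [Fintype.linearIndependent_iff]
    intro g hg
    have key : ∀ l : Fin 4, 5 * g l = ∑ k, g k := by
      apply coeff_eq'
      intro l
      have h1 : (inner ℝ (∑ i, g i • lam i.castSucc) (lam l.castSucc)) = 0 := by
        rw [hg]; simp
      rw [sum_inner] at h1
      rw [← h1]
      apply Finset.sum_congr rfl
      intro k _
      rw [real_inner_smul_left, inner_lam' lam hlam]
      simp [Fin.castSucc_inj]
    have hT : ∑ k, g k = 0 := by
      have := Finset.sum_congr rfl (fun l (_ : l ∈ Finset.univ) => key l)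
      rw [← Finset.mul_sum] at this
      simp only [Finset.sum_const, Finset.card_univ, Fintype.card_fin, nsmul_eq_mul] at this
      push_cast at this
      linarith
    intro i
    have := key i
    rw [hT] at this
    linarith
  exact hind.span_eq_top_of_card_eq_finrank
    (by simp [Quaternion.finrank_eq_four])

end Aux

set_option maxHeartbeats 1000000 in
/-- For symmetric unit quaternions `λ_0, …, λ_4`, the map
`F(Z, V, W) = 2 ∑ |Z_k|² λ_k + V W` has surjective (real) Fréchet derivative at every
nonzero point of its zero set. -/
theorem fderiv_surjective_on_zero_set (lam : Fin 5 → Quaternion ℝ)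
    (hlam : ∀ k l : Fin 5,
      (star (lam k) * lam l).re = if k = l then 1 else -1 / 4)
    (F : (Fin 5 → ℂ) × Quaternion ℝ × Quaternion ℝ → Quaternion ℝ)
    (hF : ∀ p : (Fin 5 → ℂ) × Quaternion ℝ × Quaternion ℝ,
      F p = (2 : ℝ) • (∑ k, (‖p.1 k‖ ^ 2) • lam k) + p.2.1 * p.2.2)
    (p : (Fin 5 → ℂ) × Quaternion ℝ × Quaternion ℝ) (hp : p ≠ 0) (hFp : F p = 0) :
    Function.Surjective (fderiv ℝ F p) := by
  -- the derivative
  have hPt : True := trivial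
  set L : ((Fin 5 → ℂ) × Quaternion ℝ × Quaternion ℝ) →L[ℝ] Quaternion ℝ :=
    (2 : ℝ) • (∑ k, ((2 • (innerSL ℝ (p.1 k)).comp
        ((ContinuousLinearMap.proj k).comp
          (ContinuousLinearMap.fst ℝ (Fin 5 → ℂ) (Quaternion ℝ × Quaternion ℝ)))).smulRight (lam k)))
      + (p.2.1 • ((ContinuousLinearMap.snd ℝ (Quaternion ℝ) (Quaternion ℝ)).comp
          (ContinuousLinearMap.snd ℝ (Fin 5 → ℂ) (Quaternion ℝ × Quaternion ℝ)))
         + (((ContinuousLinearMap.fst ℝ (Quaternion ℝ) (Quaternion ℝ)).comp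
          (ContinuousLinearMap.snd ℝ (Fin 5 → ℂ) (Quaternion ℝ × Quaternion ℝ))).smulRight p.2.2))
    with hL
  have hFd : HasFDerivAt F L p := by
    have hFeq : F = fun q : (Fin 5 → ℂ) × Quaternion ℝ × Quaternion ℝ =>
        (2 : ℝ) • (∑ k, (‖q.1 k‖ ^ 2) • lam k) + q.2.1 * q.2.2 := funext hF
    rw [hFeq, hL]
    have h1 : ∀ k : Fin 5, HasFDerivAt (fun q : (Fin 5 → ℂ) × Quaternion ℝ × Quaternion ℝ => (‖q.1 k‖ ^ 2) • lam k)
        ((2 • (innerSL ℝ (p.1 k)).comp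
        ((ContinuousLinearMap.proj k).comp
          (ContinuousLinearMap.fst ℝ (Fin 5 → ℂ) (Quaternion ℝ × Quaternion ℝ)))).smulRight (lam k)) p := by
      intro k
      have hcoord : HasFDerivAt (fun q : (Fin 5 → ℂ) × Quaternion ℝ × Quaternion ℝ => q.1 k)
          ((ContinuousLinearMap.proj k).comp
            (ContinuousLinearMap.fst ℝ (Fin 5 → ℂ) (Quaternion ℝ × Quaternion ℝ))) p :=
        ((ContinuousLinearMap.proj k).comp
            (ContinuousLinearMap.fst ℝ (Fin 5 → ℂ) (Quaternion ℝ × Quaternion ℝ))).hasFDerivAt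
      have := (hcoord.norm_sq).smul_const (lam k)
      simpa using this
    have h2 : HasFDerivAt (fun q : (Fin 5 → ℂ) × Quaternion ℝ × Quaternion ℝ => q.2.1 * q.2.2)
        (p.2.1 • ((ContinuousLinearMap.snd ℝ (Quaternion ℝ) (Quaternion ℝ)).comp
          (ContinuousLinearMap.snd ℝ (Fin 5 → ℂ) (Quaternion ℝ × Quaternion ℝ)))
         + (((ContinuousLinearMap.fst ℝ (Quaternion ℝ) (Quaternion ℝ)).comp
          (ContinuousLinearMap.snd ℝ (Fin 5 → ℂ) (Quaternion ℝ × Quaternion ℝ))).smulRight p.2.2)) p :=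
      HasFDerivAt.mul'
        (((ContinuousLinearMap.fst ℝ (Quaternion ℝ) (Quaternion ℝ)).comp
          (ContinuousLinearMap.snd ℝ (Fin 5 → ℂ) (Quaternion ℝ × Quaternion ℝ))).hasFDerivAt)
        (((ContinuousLinearMap.snd ℝ (Quaternion ℝ) (Quaternion ℝ)).comp
          (ContinuousLinearMap.snd ℝ (Fin 5 → ℂ) (Quaternion ℝ × Quaternion ℝ))).hasFDerivAt)
    exact ((HasFDerivAt.fun_sum (u := Finset.univ) (fun k _ => h1 k)).fun_const_smul (2:ℝ)).fun_add h2
  rw [hFd.fderiv]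
  -- evaluation lemma
  have hLapp : ∀ v : (Fin 5 → ℂ) × Quaternion ℝ × Quaternion ℝ, L v =
      (2:ℝ) • (∑ k, ((2:ℝ) * (inner ℝ (p.1 k) (v.1 k))) • lam k)
        + (p.2.1 * v.2.2 + v.2.1 * p.2.2) := by
    intro v
    simp [hL, ContinuousLinearMap.smul_apply, ContinuousLinearMap.sum_apply,
      ContinuousLinearMap.smulRight_apply, ContinuousLinearMap.comp_apply,
      smul_eq_mul, mul_add]
  rcases eq_or_ne p.2.2 0 with hW | hW
  · rcases eq_or_ne p.2.1 0 with hV | hV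
    · -- V = W = 0 : the hard case
      have hZ : p.1 ≠ 0 := by
        intro h
        apply hp
        have : p = (p.1, p.2.1, p.2.2) := rfl
        rw [this, h, hV, hW]; rfl
      set c : Fin 5 → ℝ := fun k => ‖p.1 k‖ ^ 2 with hc
      have hsum : ∑ k, c k • lam k = 0 := by
        have := hF p
        rw [hFp, hV, hW, mul_zero, add_zero] at this
        have h2 := this.symm
        rcases smul_eq_zero.mp h2 with h | h
        · norm_num at h
        · exact h
      have hrel := rel_of_comb' lam hlam c hsum
      obtain ⟨j, hj⟩ : ∃ j, p.1 j ≠ 0 := by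
        by_contra h
        push_neg at h
        exact hZ (funext h)
      have hcj : 0 < c j := by
        simp only [hc]
        have := norm_pos_iff.mpr hj
        positivity
      have hS : 0 < ∑ k, c k := by
        have := hrel j; linarith
      have hck : ∀ k, 0 < c k := by
        intro k
        have := hrel k; linarith
      -- every lam k is in the range of L
      have hmem : ∀ k : Fin 5, lam k ∈ LinearMap.range (L : ((Fin 5 → ℂ) × Quaternion ℝ × Quaternion ℝ) →ₗ[ℝ] Quaternion ℝ) := by
        intro k
        refine ⟨(Pi.single k ((1 / (4 * c k)) • p.1 k), 0, 0), ?_⟩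
        have : L (Pi.single k ((1 / (4 * c k)) • p.1 k), 0, 0) = lam k := by
          rw [hLapp]
          simp only [hV, hW, mul_zero, zero_mul, add_zero]
          rw [Finset.sum_eq_single k]
          · rw [Pi.single_eq_same, real_inner_smul_right, real_inner_self_eq_norm_sq]
            rw [smul_smul]
            have : (2:ℝ) * ((2:ℝ) * (1 / (4 * c k) * ‖p.1 k‖ ^ 2)) = 1 := by
              have hnorm : ‖p.1 k‖ ^ 2 = c k := by
                simp [hc]
              have h4 : (4:ℝ) * c k ≠ 0 := ne_of_gt (by nlinarith [hck k])
              rw [hnorm]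
              field_simp
              rw [mul_div_assoc, div_self (ne_of_gt (hck k))]; norm_num
            rw [this, one_smul]
          · intro b _ hb
            rw [Pi.single_eq_of_ne hb]
            simp
          · intro h; exact absurd (Finset.mem_univ k) h
        exact this
      intro q
      have hq : q ∈ Submodule.span ℝ (Set.range (fun i : Fin 4 => lam i.castSucc)) := by
        rw [lam_span' lam hlam]; trivial
      have hle : Submodule.span ℝ (Set.range (fun i : Fin 4 => lam i.castSucc))
          ≤ LinearMap.range (L : ((Fin 5 → ℂ) × Quaternion ℝ × Quaternion ℝ) →ₗ[ℝ] Quaternion ℝ) := by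
        rw [Submodule.span_le]
        rintro x ⟨i, rfl⟩
        exact hmem i.castSucc
      obtain ⟨v, hv⟩ := hle hq
      exact ⟨v, hv⟩
    · -- V ≠ 0
      intro q
      refine ⟨(0, 0, p.2.1⁻¹ * q), ?_⟩
      rw [hLapp]
      simp [mul_inv_cancel_left₀ hV]
  · -- W ≠ 0
    intro q
    refine ⟨(0, q * p.2.2⁻¹, 0), ?_⟩
    rw [hLapp]
    simp [inv_mul_cancel_right₀ hW]
end

section
/- Let λ_0, …, λ_4 be quaternions with ⟨λ_k, λ_l⟩ = 1 if k = l and −1/4 if k ≠ l. If (Z, V, W) ∈ ℂ^5 × ℍ × ℍ satisfies 2 ∑_{k=0}^{4} |Z_k|² λ_k + V W = 0 and ∑_{k=0}^{4} |Z_k|² + |V|² + |W|² = 1, then |V W| < 1/2. -/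
open Quaternion

open scoped RealInnerProductSpace

/-- For any point `(Z, V, W)` of the intersection of quadrics `Y`, one has `|VW| < 1/2`. -/
theorem norm_VW_lt_half (lam : Fin 5 → Quaternion ℝ)
    (hlam : ∀ k l : Fin 5,
      (star (lam k) * lam l).re = if k = l then 1 else -1 / 4)
    (Z : Fin 5 → ℂ) (V W : Quaternion ℝ)
    (h1 : (2 : ℝ) • (∑ k, (‖Z k‖ ^ 2) • lam k) + V * W = 0)
    (h2 : (∑ k, ‖Z k‖ ^ 2) + ‖V‖ ^ 2 + ‖W‖ ^ 2 = 1) :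
    ‖V * W‖ < 1 / 2 := by
  set t : Fin 5 → ℝ := fun k => ‖Z k‖ ^ 2 with ht
  have htnn : ∀ k, 0 ≤ t k := fun k => sq_nonneg _
  set S : Quaternion ℝ := ∑ k, t k • lam k with hS
  have hVW : V * W = -((2 : ℝ) • S) := (neg_eq_of_add_eq_zero_right h1).symm
  have hnorm : ‖V * W‖ = 2 * ‖S‖ := by
    rw [hVW, norm_neg, norm_smul]; simp
  have hinner : ∀ k l, ⟪lam k, lam l⟫ = if k = l then (1 : ℝ) else -1 / 4 := by
    intro k l
    rw [Quaternion.inner_def]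
    have hcomm : (lam k * star (lam l)).re = (star (lam l) * lam k).re := by
      simp [Quaternion.re_mul]; ring
    rw [hcomm, hlam l k]
    simp [eq_comm]
  have hSsq : ‖S‖ ^ 2 = (5 * ∑ k, t k ^ 2 - (∑ k, t k) ^ 2) / 4 := by
    have : ‖S‖ ^ 2 = ⟪S, S⟫ := (real_inner_self_eq_norm_sq S).symm
    rw [this, hS]
    rw [sum_inner]
    have : ∀ k : Fin 5, ⟪t k • lam k, ∑ l, t l • lam l⟫
        = ∑ l, t k * t l * ⟪lam k, lam l⟫ := by
      intro k
      rw [inner_sum]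
      refine Finset.sum_congr rfl fun l _ => ?_
      rw [real_inner_smul_left, real_inner_smul_right]; ring
    rw [Finset.sum_congr rfl fun k _ => this k]
    have hterm : ∀ k l : Fin 5, t k * t l * ⟪lam k, lam l⟫
        = t k * t l * (-1 / 4) + (if k = l then t k * t l * (5 / 4) else 0) := by
      intro k l
      rw [hinner]
      split_ifs <;> ring
    rw [Finset.sum_congr rfl fun k _ => Finset.sum_congr rfl fun l _ => hterm k l]
    simp only [Finset.sum_add_distrib, Finset.sum_ite_eq, Finset.mem_univ, if_true]
    have e1 : ∀ x : Fin 5, ∑ y : Fin 5, t x * t y * (-1 / 4 : ℝ) = t x * ((∑ k, t k) * (-1 / 4)) := by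
      intro x
      rw [← Finset.sum_mul, ← Finset.mul_sum]; ring
    rw [Finset.sum_congr rfl fun x _ => e1 x, ← Finset.sum_mul]
    have e2 : ∑ i : Fin 5, t i * t i * (5 / 4 : ℝ) = (∑ k, t k ^ 2) * (5 / 4) := by
      rw [Finset.sum_mul]
      exact Finset.sum_congr rfl fun i _ => by ring
    rw [e2]; ring
  have hA : ∑ k, t k ^ 2 ≤ (∑ k, t k) ^ 2 :=
    Finset.sum_sq_le_sq_sum_of_nonneg fun k _ => htnn k
  have hs0 : 0 ≤ ∑ k, t k := Finset.sum_nonneg fun k _ => htnn k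
  have hVWsq : ‖V * W‖ ^ 2 = 5 * ∑ k, t k ^ 2 - (∑ k, t k) ^ 2 := by
    rw [hnorm, mul_pow, hSsq]; ring
  have hmul : ‖V * W‖ = ‖V‖ * ‖W‖ := norm_mul V W
  have h2' : (∑ k, t k) + ‖V‖ ^ 2 + ‖W‖ ^ 2 = 1 := h2
  nlinarith [norm_nonneg (V * W), sq_nonneg (‖V‖ - ‖W‖), sq_nonneg (‖V * W‖ - 2 * ∑ k, t k),
    sq_nonneg (‖V * W‖ + 2 * ∑ k, t k), norm_nonneg V, norm_nonneg W]
end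

section
/- Let λ_0, …, λ_4 be quaternions with ⟨λ_k, λ_l⟩ = 1 if k = l and −1/4 if k ≠ l. For every a = (a_0, …, a_4) ∈ ℝ^5 with all a_k ≥ 0 and every b ∈ ℝ such that ∑_{k=0}^{4} a_k² + b² = 1, there exist Z ∈ ℝ^5 with all Z_k ≥ 0 and V, W ∈ ℍ such that: 2 ∑_{k=0}^{4} Z_k² λ_k + V W = 0, ∑_{k=0}^{4} Z_k² + |V|² + |W|² = 1, Z_k = √(1 − 2|V W|) · a_k for all k, and |V| − |W| = √(1 − 2|V W|) · b. -/
open Quaternion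

/-- Surjectivity of the map `ψ ∘ φ : Y₊ → S₊`: every `(a, b)` in the nonnegative part of
the unit sphere arises from a point `(Z, V, W)` of `Y` with nonnegative coordinates `Z_k`. -/
theorem psi_surjective (lam : Fin 5 → Quaternion ℝ)
    (hlam : ∀ k l : Fin 5,
      (star (lam k) * lam l).re = if k = l then 1 else -1 / 4)
    (a : Fin 5 → ℝ) (ha : ∀ k, 0 ≤ a k) (b : ℝ)
    (hab : (∑ k, a k ^ 2) + b ^ 2 = 1) :
    ∃ (Z : Fin 5 → ℝ) (V W : Quaternion ℝ),
      (∀ k, 0 ≤ Z k) ∧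
      (2 : ℝ) • (∑ k, (Z k ^ 2) • lam k) + V * W = 0 ∧
      (∑ k, Z k ^ 2) + ‖V‖ ^ 2 + ‖W‖ ^ 2 = 1 ∧
      (∀ k, Z k = Real.sqrt (1 - 2 * ‖V * W‖) * a k) ∧
      ‖V‖ - ‖W‖ = Real.sqrt (1 - 2 * ‖V * W‖) * b := by
  classical
  set q : Quaternion ℝ := ∑ k, (a k ^ 2) • lam k with hq
  set s : ℝ := ‖q‖ with hs
  have hs0 : (0:ℝ) ≤ s := norm_nonneg _
  have hd : (0:ℝ) < 1 + 4 * s := by linarith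
  set t : ℝ := Real.sqrt (1 / (1 + 4 * s)) with ht
  have ht0 : 0 ≤ t := Real.sqrt_nonneg _
  have ht2 : t ^ 2 = 1 / (1 + 4 * s) := Real.sq_sqrt (by positivity)
  set r : ℝ := Real.sqrt (b ^ 2 + 8 * s) with hr
  have hr0 : 0 ≤ r := Real.sqrt_nonneg _
  have hr2 : r ^ 2 = b ^ 2 + 8 * s := Real.sq_sqrt (by positivity)
  have hrb : |b| ≤ r := by
    rw [hr, ← Real.sqrt_sq_eq_abs]
    exact Real.sqrt_le_sqrt (by nlinarith)
  have hrb' : -r ≤ b ∧ b ≤ r := abs_le.mp hrb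
  set α : ℝ := t * (b + r) / 2 with hα
  set β : ℝ := t * (r - b) / 2 with hβ
  have hα0 : 0 ≤ α := by
    have : 0 ≤ b + r := by linarith [hrb'.1]
    positivity
  have hβ0 : 0 ≤ β := by
    have : 0 ≤ r - b := by linarith [hrb'.2]
    positivity
  have hαβ : α * β = 2 * t ^ 2 * s := by
    have : α * β = t ^ 2 * (r ^ 2 - b ^ 2) / 4 := by ring
    rw [this, hr2]; ring
  set v : Quaternion ℝ := if h : q = 0 then 1 else s⁻¹ • (-q) with hv
  have hvnorm : ‖v‖ = 1 := by
    rw [hv]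
    split
    · simp
    · rename_i h
      have hsne : s ≠ 0 := by simpa [hs] using h
      rw [norm_smul, norm_neg, norm_inv, Real.norm_eq_abs, abs_of_nonneg hs0, ← hs]
      field_simp
  have hsv : s • v = -q := by
    rw [hv]
    split
    · rename_i h; simp [hs, h]
    · rename_i h
      have hsne : s ≠ 0 := by simpa [hs] using h
      rw [smul_smul]
      field_simp
      exact one_smul _ _
  refine ⟨fun k => t * a k, (α : Quaternion ℝ), β • v, fun k => mul_nonneg ht0 (ha k), ?_, ?_, ?_, ?_⟩
  · have hVW : (α : Quaternion ℝ) * (β • v) = (2 * t ^ 2) • (-q) := by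
      rw [mul_smul_comm, coe_mul_eq_smul, smul_smul, mul_comm β α, hαβ]
      rw [show (2 * t ^ 2 * s) • v = (2 * t ^ 2) • (s • v) by rw [smul_smul]]
      rw [hsv]
    have hsum : (∑ k, ((t * a k) ^ 2) • lam k) = t ^ 2 • q := by
      rw [hq, Finset.smul_sum]
      refine Finset.sum_congr rfl fun k _ => ?_
      rw [smul_smul, show t ^ 2 * a k ^ 2 = (t * a k) ^ 2 from by ring]
    rw [hVW, hsum, smul_smul, smul_neg, ← sub_eq_add_neg, sub_eq_zero]
  · have hsum : (∑ k, (t * a k) ^ 2) = t ^ 2 * (1 - b ^ 2) := by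
      have : (∑ k, (t * a k) ^ 2) = t ^ 2 * ∑ k, a k ^ 2 := by
        rw [Finset.mul_sum]; exact Finset.sum_congr rfl fun k _ => by ring
      rw [this]; congr 1; linarith
    have hV : ‖(α : Quaternion ℝ)‖ = α := by
      rw [Quaternion.norm_coe, Real.norm_eq_abs, abs_of_nonneg hα0]
    have hW : ‖β • v‖ = β := by
      rw [norm_smul, Real.norm_eq_abs, abs_of_nonneg hβ0, hvnorm, mul_one]
    have hαβ2 : α ^ 2 + β ^ 2 = t ^ 2 * (b ^ 2 + 4 * s) := by
      rw [hα, hβ]; linear_combination (t ^ 2 / 2) * hr2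
    have htkey : t ^ 2 * (1 + 4 * s) = 1 := by
      rw [ht2]; field_simp
    rw [hsum, hV, hW]
    linear_combination hαβ2 + htkey
  · have hVW : ‖(α : Quaternion ℝ) * (β • v)‖ = 2 * t ^ 2 * s := by
      rw [norm_mul, Quaternion.norm_coe, Real.norm_eq_abs, abs_of_nonneg hα0,
        norm_smul, Real.norm_eq_abs, abs_of_nonneg hβ0, hvnorm, mul_one, hαβ]
    intro k
    rw [hVW]
    have h1 : 1 - 2 * (2 * t ^ 2 * s) = t ^ 2 := by
      rw [ht2]; field_simp; ring
    rw [h1, Real.sqrt_sq ht0]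
  · have hVW : ‖(α : Quaternion ℝ) * (β • v)‖ = 2 * t ^ 2 * s := by
      rw [norm_mul, Quaternion.norm_coe, Real.norm_eq_abs, abs_of_nonneg hα0,
        norm_smul, Real.norm_eq_abs, abs_of_nonneg hβ0, hvnorm, mul_one, hαβ]
    have hV : ‖(α : Quaternion ℝ)‖ = α := by
      rw [Quaternion.norm_coe, Real.norm_eq_abs, abs_of_nonneg hα0]
    have hW : ‖β • v‖ = β := by
      rw [norm_smul, Real.norm_eq_abs, abs_of_nonneg hβ0, hvnorm, mul_one]
    rw [hVW, hV, hW]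
    have h1 : 1 - 2 * (2 * t ^ 2 * s) = t ^ 2 := by
      rw [ht2]; field_simp; ring
    rw [h1, Real.sqrt_sq ht0, hα, hβ]
    ring
end

section
/- Let λ_0, …, λ_4 be quaternions with ⟨λ_k, λ_l⟩ = 1 if k = l and −1/4 if k ≠ l. Suppose (Z, V, W) and (Z', V', W') both consist of Z, Z' ∈ ℝ^5 with nonnegative entries and V, W, V', W' ∈ ℍ satisfying 2 ∑_{k} Z_k² λ_k + V W = 0, ∑_{k} Z_k² + |V|² + |W|² = 1 (and the same equations for (Z', V', W')). If Z_k / √(1 − 2|V W|) = Z'_k / √(1 − 2|V' W'|) for all k and (|V| − |W|)/√(1 − 2|V W|) = (|V'| − |W'|)/√(1 − 2|V' W'|), then Z = Z', V W = V' W', |V| = |V'|, and |W| = |W'|. -/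
open Quaternion

/-- Positivity of the denominator `1 - 2‖V*W‖`. -/
lemma psi_denom_pos (lam : Fin 5 → Quaternion ℝ) (Z : Fin 5 → ℝ) (V W : Quaternion ℝ)
    (h1 : (2 : ℝ) • (∑ k, (Z k ^ 2) • lam k) + V * W = 0)
    (h2 : (∑ k, Z k ^ 2) + ‖V‖ ^ 2 + ‖W‖ ^ 2 = 1) :
    0 < 1 - 2 * ‖V * W‖ := by
  have hnm : ‖V * W‖ = ‖V‖ * ‖W‖ := norm_mul _ _
  by_contra h
  push_neg at h
  have hsum : (0:ℝ) ≤ ∑ k, Z k ^ 2 := Finset.sum_nonneg fun k _ => sq_nonneg _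
  have hD : 1 - 2 * ‖V * W‖ = (∑ k, Z k ^ 2) + (‖V‖ - ‖W‖) ^ 2 := by
    rw [hnm]; nlinarith [h2]
  have hs0 : (∑ k, Z k ^ 2) = 0 := by nlinarith [sq_nonneg (‖V‖ - ‖W‖)]
  have hZ0 : ∀ k, Z k ^ 2 = 0 := fun k =>
    (Finset.sum_eq_zero_iff_of_nonneg (fun k _ => sq_nonneg (Z k))).1 hs0 k (Finset.mem_univ k)
  have hVW : V * W = 0 := by
    have hS : (∑ k, (Z k ^ 2) • lam k) = 0 := by
      apply Finset.sum_eq_zero; intro k _; rw [hZ0 k, zero_smul]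
    rw [hS] at h1; simpa using h1
  rw [hVW, norm_zero] at h
  linarith

/-- Injectivity of `ψ`: two points of `Y₊` with the same image under `ψ ∘ φ` have the
same `Z`, the same product `VW` and the same norms `|V|`, `|W|`. -/
theorem psi_injective (lam : Fin 5 → Quaternion ℝ)
    (hlam : ∀ k l : Fin 5,
      (star (lam k) * lam l).re = if k = l then 1 else -1 / 4)
    (Z Z' : Fin 5 → ℝ) (V W V' W' : Quaternion ℝ)
    (hZ : ∀ k, 0 ≤ Z k) (hZ' : ∀ k, 0 ≤ Z' k)
    (h1 : (2 : ℝ) • (∑ k, (Z k ^ 2) • lam k) + V * W = 0)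
    (h2 : (∑ k, Z k ^ 2) + ‖V‖ ^ 2 + ‖W‖ ^ 2 = 1)
    (h1' : (2 : ℝ) • (∑ k, (Z' k ^ 2) • lam k) + V' * W' = 0)
    (h2' : (∑ k, Z' k ^ 2) + ‖V'‖ ^ 2 + ‖W'‖ ^ 2 = 1)
    (ha : ∀ k, Z k / Real.sqrt (1 - 2 * ‖V * W‖) =
      Z' k / Real.sqrt (1 - 2 * ‖V' * W'‖))
    (hb : (‖V‖ - ‖W‖) / Real.sqrt (1 - 2 * ‖V * W‖) =
      (‖V'‖ - ‖W'‖) / Real.sqrt (1 - 2 * ‖V' * W'‖)) :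
    Z = Z' ∧ V * W = V' * W' ∧ ‖V‖ = ‖V'‖ ∧ ‖W‖ = ‖W'‖ := by
  have hD : 0 < 1 - 2 * ‖V * W‖ := psi_denom_pos lam Z V W h1 h2
  have hD' : 0 < 1 - 2 * ‖V' * W'‖ := psi_denom_pos lam Z' V' W' h1' h2'
  set t := Real.sqrt (1 - 2 * ‖V * W‖) with ht_def
  set t' := Real.sqrt (1 - 2 * ‖V' * W'‖) with ht'_def
  have ht : 0 < t := Real.sqrt_pos.2 hD
  have ht' : 0 < t' := Real.sqrt_pos.2 hD'
  have ht2 : t ^ 2 = 1 - 2 * ‖V * W‖ := Real.sq_sqrt hD.le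
  have ht'2 : t' ^ 2 = 1 - 2 * ‖V' * W'‖ := Real.sq_sqrt hD'.le
  set r := t / t' with hr_def
  have hr : 0 < r := div_pos ht ht'
  have hZr : ∀ k, Z k = r * Z' k := by
    intro k
    have := ha k
    field_simp [hr_def] at this ⊢
    rw [hr_def, mul_div_assoc', eq_div_iff ht'.ne']
    linarith [this]
  have hsum_eq : (∑ k, (Z k ^ 2) • lam k) = (r ^ 2 : ℝ) • ∑ k, (Z' k ^ 2) • lam k := by
    rw [Finset.smul_sum]
    refine Finset.sum_congr rfl fun k _ => ?_
    rw [hZr k, mul_pow, smul_smul]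
  have hVWr : V * W = (r ^ 2 : ℝ) • (V' * W') := by
    have e1 : V * W = -((2 : ℝ) • (∑ k, (Z k ^ 2) • lam k)) :=
      eq_neg_of_add_eq_zero_right h1
    have e2 : V' * W' = -((2 : ℝ) • (∑ k, (Z' k ^ 2) • lam k)) :=
      eq_neg_of_add_eq_zero_right h1'
    rw [e1, e2, hsum_eq, smul_comm, smul_neg]
  have hnorm : ‖V * W‖ = r ^ 2 * ‖V' * W'‖ := by
    rw [hVWr, norm_smul, Real.norm_eq_abs, abs_of_nonneg (sq_nonneg r)]
  have hr2D : r ^ 2 * (1 - 2 * ‖V' * W'‖) = 1 - 2 * ‖V * W‖ := by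
    rw [← ht2, ← ht'2, hr_def, div_pow, div_mul_cancel₀]
    positivity
  have hr2 : r ^ 2 = 1 := by nlinarith [hr2D, hnorm]
  have hr1 : r = 1 := by nlinarith [hr.le]
  have hZZ : Z = Z' := funext fun k => by rw [hZr k, hr1, one_mul]
  have hVWeq : V * W = V' * W' := by rw [hVWr, hr1, one_pow, one_smul]
  have htt : t = t' := by
    rw [hr_def] at hr1
    field_simp at hr1
    exact hr1
  have hdiff : ‖V‖ - ‖W‖ = ‖V'‖ - ‖W'‖ := by
    rw [htt, div_eq_div_iff ht'.ne' ht'.ne'] at hb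
    exact mul_right_cancel₀ ht'.ne' hb
  have hprod : ‖V‖ * ‖W‖ = ‖V'‖ * ‖W'‖ := by
    rw [← norm_mul, ← norm_mul, hVWeq]
  have hsq : ‖V‖ ^ 2 + ‖W‖ ^ 2 = ‖V'‖ ^ 2 + ‖W'‖ ^ 2 := by
    have : (∑ k, Z k ^ 2) = (∑ k, Z' k ^ 2) := by rw [hZZ]
    linarith [h2, h2', this]
  have hsumn : ‖V‖ + ‖W‖ = ‖V'‖ + ‖W'‖ := by
    have hsq2 : (‖V‖ + ‖W‖) ^ 2 = (‖V'‖ + ‖W'‖) ^ 2 := by linear_combination hsq + 2 * hprod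
    have h1n : (0:ℝ) ≤ ‖V‖ + ‖W‖ := by positivity
    have h2n : (0:ℝ) ≤ ‖V'‖ + ‖W'‖ := by positivity
    calc ‖V‖ + ‖W‖ = Real.sqrt ((‖V‖ + ‖W‖) ^ 2) := (Real.sqrt_sq h1n).symm
      _ = Real.sqrt ((‖V'‖ + ‖W'‖) ^ 2) := by rw [hsq2]
      _ = ‖V'‖ + ‖W'‖ := Real.sqrt_sq h2n
  have hVn : ‖V‖ = ‖V'‖ := by linarith
  have hWn : ‖W‖ = ‖W'‖ := by linarith [hdiff, hVn]
  exact ⟨hZZ, hVWeq, hVn, hWn⟩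
end

section
/- Let λ_0, …, λ_4 be quaternions with ⟨λ_k, λ_l⟩ = 1 if k = l and −1/4 if k ≠ l. Suppose Z, Z' ∈ ℝ^5 have nonnegative entries and V, W ∈ ℍ are such that both (Z, V, W) and (Z', V, W) satisfy 2 ∑_{k=0}^{4} Z_k² λ_k + V W = 0 and ∑_{k=0}^{4} Z_k² + |V|² + |W|² = 1. Then Z = Z'. -/
open Quaternion

lemma quat_sum_re {ι : Type*} (s : Finset ι) (f : ι → Quaternion ℝ) :
    (∑ x ∈ s, f x).re = ∑ x ∈ s, (f x).re := by
  classical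
  induction s using Finset.induction with
  | empty => simp
  | insert _ _ h ih => simp [Finset.sum_insert h, ih]

/-- A point of `Y₊` is determined by `(V, W)`: if `(Z, V, W)` and `(Z', V, W)` both lie
in `Y` and have nonnegative coordinates `Z_k`, `Z'_k`, then `Z = Z'`. -/
theorem Z_determined_by_VW (lam : Fin 5 → Quaternion ℝ)
    (hlam : ∀ k l : Fin 5,
      (star (lam k) * lam l).re = if k = l then 1 else -1 / 4)
    (Z Z' : Fin 5 → ℝ) (V W : Quaternion ℝ)
    (hZ : ∀ k, 0 ≤ Z k) (hZ' : ∀ k, 0 ≤ Z' k)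
    (h1 : (2 : ℝ) • (∑ k, (Z k ^ 2) • lam k) + V * W = 0)
    (h2 : (∑ k, Z k ^ 2) + ‖V‖ ^ 2 + ‖W‖ ^ 2 = 1)
    (h1' : (2 : ℝ) • (∑ k, (Z' k ^ 2) • lam k) + V * W = 0)
    (h2' : (∑ k, Z' k ^ 2) + ‖V‖ ^ 2 + ‖W‖ ^ 2 = 1) :
    Z = Z' := by
  set a : Fin 5 → ℝ := fun k => Z k ^ 2 - Z' k ^ 2 with ha
  have hsum0 : ∑ k, a k = 0 := by
    have : ∑ k, a k = (∑ k, Z k ^ 2) - (∑ k, Z' k ^ 2) := by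
      simp [ha, Finset.sum_sub_distrib]
    rw [this]; linarith
  have key : (2 : ℝ) • (∑ k, (Z k ^ 2) • lam k) = (2 : ℝ) • (∑ k, (Z' k ^ 2) • lam k) := by
    have hA := eq_neg_of_add_eq_zero_left h1
    have hB := eq_neg_of_add_eq_zero_left h1'
    rw [hA, hB]
  have key2 : (∑ k, (Z k ^ 2) • lam k) = (∑ k, (Z' k ^ 2) • lam k) :=
    smul_right_injective _ (by norm_num : (2:ℝ) ≠ 0) key
  have hS : ∑ k, a k • lam k = 0 := by
    have : ∑ k, a k • lam k
        = (∑ k, (Z k ^ 2) • lam k) - (∑ k, (Z' k ^ 2) • lam k) := by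
      simp [ha, sub_smul, Finset.sum_sub_distrib]
    rw [this, key2, sub_self]
  have h0 : (star (∑ k, a k • lam k) * (∑ l, a l • lam l)).re = 0 := by
    rw [hS]; simp
  have hexp : (star (∑ k, a k • lam k) * (∑ l, a l • lam l)).re
      = ∑ k, ∑ l, a k * a l * (if k = l then 1 else -1 / 4) := by
    rw [star_sum, Finset.sum_mul_sum, quat_sum_re]
    apply Finset.sum_congr rfl
    intro k _
    rw [quat_sum_re]
    apply Finset.sum_congr rfl
    intro l _
    rw [Quaternion.star_smul, smul_mul_assoc, mul_smul_comm, smul_smul]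
    rw [Quaternion.re_smul, smul_eq_mul, hlam, mul_assoc]
  have hrow : ∀ k, ∑ l, a k * a l * (if k = l then 1 else -1 / 4)
      = (5 / 4) * a k ^ 2 := by
    intro k
    have step : ∀ l, a k * a l * (if k = l then 1 else -1 / 4)
        = a k * a l * (-1 / 4) + (if k = l then a k * a l * (5 / 4) else 0) := by
      intro l; split_ifs <;> ring
    rw [Finset.sum_congr rfl fun l _ => step l, Finset.sum_add_distrib,
      Finset.sum_ite_eq (Finset.univ) k (fun l => a k * a l * (5/4))]
    have : ∑ l, a k * a l * (-1 / 4) = a k * (∑ l, a l) * (-1 / 4) := by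
      rw [← Finset.sum_mul, ← Finset.mul_sum]
    rw [this, hsum0]
    simp; ring
  have hsq : ∑ k, (a k) ^ 2 = 0 := by
    have h5 : ∑ k, (5 / 4 : ℝ) * a k ^ 2 = 0 := by
      rw [← Finset.sum_congr rfl fun k _ => hrow k, ← hexp, h0]
    have : (5 / 4 : ℝ) * ∑ k, a k ^ 2 = 0 := by
      rw [Finset.mul_sum]; exact h5
    linarith
  have hak : ∀ k, a k = 0 := by
    intro k
    have := (Finset.sum_eq_zero_iff_of_nonneg (fun i _ => sq_nonneg (a i))).mp hsq k
      (Finset.mem_univ k)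
    exact pow_eq_zero_iff (by norm_num) |>.mp this
  funext k
  have hk : Z k ^ 2 = Z' k ^ 2 := by have := hak k; simp [ha] at this; linarith
  nlinarith [hZ k, hZ' k, sq_nonneg (Z k - Z' k), sq_nonneg (Z k + Z' k)]
end

section
/- Let m ≥ 1 and let Y be the set of all (Z, V, W) ∈ ℂ^m × ℍ × ℍ satisfying (1/2) ∑_{k=1}^{m} |Z_k|² + V W = 0 and ∑_{k=1}^{m} |Z_k|² + |V|² + |W|² = 1, endowed with the subspace topology. Then Y is homeomorphic to the product S^{2m} × S³ of the unit sphere of ℝ^{2m+1} and the unit sphere of ℝ^4. -/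
open Quaternion Metric

noncomputable section YAux

/-- Sphere congruence along a linear isometry equivalence. -/
def sphereHomeo {E F : Type*} [NormedAddCommGroup E] [NormedAddCommGroup F]
    [NormedSpace ℝ E] [NormedSpace ℝ F] (L : E ≃ₗᵢ[ℝ] F) :
    (sphere (0:E) 1) ≃ₜ (sphere (0:F) 1) :=
  (L.toIsometryEquiv.toHomeomorph.image (sphere (0:E) 1)).trans
    (Homeomorph.setCongr (by
      rw [show (L.toIsometryEquiv.toHomeomorph '' (sphere (0:E) 1) : Set F)
          = L.toIsometryEquiv '' (sphere (0:E) 1) from rfl,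
        L.toIsometryEquiv.image_sphere]
      simp))

lemma eucl_norm_sq {ι : Type*} [Fintype ι] (x : EuclideanSpace ℝ ι) : ‖x‖^2 = ∑ i, x i ^2 := by
  rw [EuclideanSpace.norm_eq, Real.sq_sqrt (by positivity)]
  simp [sq_abs]

lemma quat_smul (V W : ℍ) (c : ℝ) (h : V * W = (c:ℍ)) :
    (‖V‖^2) • W = c • star V := by
  have h2 := congrArg (star V * ·) h
  simp only [← mul_assoc, Quaternion.star_mul_self, Quaternion.coe_mul_eq_smul,
    Quaternion.mul_coe_eq_smul] at h2
  rw [sq, ← Quaternion.normSq_eq_norm_mul_self]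
  exact h2

lemma quat_recover1 (V W : ℍ) (h : V * W = ((-(‖V‖*‖W‖):ℝ) : ℍ)) (hab : ‖V‖ + ‖W‖ = 1) :
    ‖V‖ • (V - star W) = V := by
  rcases eq_or_ne V 0 with hV | hV
  · simp [hV]
  · have ha : ‖V‖ ≠ 0 := norm_ne_zero_iff.2 hV
    have h1 := quat_smul V W _ h
    have h2' : (‖V‖^2) • star W = (-(‖V‖*‖W‖)) • V := by
      simpa only [Quaternion.star_smul, star_star] using congrArg star h1
    have hw : star W = ((-(‖V‖*‖W‖))/‖V‖^2) • V := by
      have h3 := congrArg (fun x : ℍ => (‖V‖^2)⁻¹ • x) h2'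
      simpa [smul_smul, inv_mul_cancel₀ (pow_ne_zero 2 ha), div_eq_inv_mul] using h3
    rw [smul_sub, hw, smul_smul]
    have hc : ‖V‖ * ((-(‖V‖*‖W‖))/‖V‖^2) = -‖W‖ := by field_simp
    rw [hc, ← sub_smul]
    have h4 : ‖V‖ - (-‖W‖) = 1 := by linarith
    rw [h4, one_smul]

lemma quat_recover2 (V W : ℍ) (h : V * W = ((-(‖V‖*‖W‖):ℝ) : ℍ)) (hab : ‖V‖ + ‖W‖ = 1) :
    (-‖W‖) • star (V - star W) = W := by
  have h' : star W * star V = ((-(‖star W‖*‖star V‖):ℝ) : ℍ) := by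
    rw [Quaternion.norm_star, Quaternion.norm_star, ← star_mul, h, Quaternion.star_coe,
      mul_comm ‖W‖ ‖V‖]
  have hab' : ‖star W‖ + ‖star V‖ = 1 := by
    rw [Quaternion.norm_star, Quaternion.norm_star]; linarith
  have h5 := quat_recover1 (star W) (star V) h' hab'
  rw [star_star, Quaternion.norm_star] at h5
  have h6 := congrArg star h5
  simp only [Quaternion.star_smul, star_sub, star_star] at h6
  rw [star_sub, star_star, neg_smul, smul_sub, neg_sub]
  rw [smul_sub] at h6
  exact h6

lemma sq_abs_complex (z : ℂ) : ‖z‖ ^ 2 = z.re^2 + z.im^2 := by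
  rw [Complex.sq_norm, Complex.normSq_apply]; ring

lemma real_eq_one_of_sq {x : ℝ} (h0 : 0 ≤ x) (h : x^2 = 1) : x = 1 := by
  calc x = Real.sqrt (x^2) := (Real.sqrt_sq h0).symm
    _ = 1 := by rw [h, Real.sqrt_one]

end YAux

noncomputable section YMain

def Yset (m : ℕ) : Set ((Fin m → ℂ) × Quaternion ℝ × Quaternion ℝ) :=
  {p | ((((1 : ℝ) / 2) * ∑ k, ‖p.1 k‖ ^ 2 : ℝ) : Quaternion ℝ) + p.2.1 * p.2.2 = 0 ∧
    (∑ k, ‖p.1 k‖ ^ 2) + ‖p.2.1‖ ^ 2 + ‖p.2.2‖ ^ 2 = 1}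

abbrev Esp (m : ℕ) := WithLp 2 (EuclideanSpace ℝ (Fin m ⊕ Fin m) × EuclideanSpace ℝ (Fin 1))

variable {m : ℕ}

lemma Y_facts {p : (Fin m → ℂ) × Quaternion ℝ × Quaternion ℝ} (hp : p ∈ Yset m) :
    p.2.1 * p.2.2 = ((-(‖p.2.1‖ * ‖p.2.2‖) : ℝ) : Quaternion ℝ) ∧
    ‖p.2.1‖ * ‖p.2.2‖ = (∑ k, ‖p.1 k‖ ^ 2) / 2 ∧
    ‖p.2.1‖ + ‖p.2.2‖ = 1 := by
  obtain ⟨h1, h2⟩ := hp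
  set r := ∑ k, ‖p.1 k‖ ^ 2 with hrdef
  have hr : 0 ≤ r := Finset.sum_nonneg fun k _ => by positivity
  have hVW : p.2.1 * p.2.2 = ((-(1/2*r) : ℝ) : Quaternion ℝ) := by
    rw [Quaternion.coe_neg]; exact eq_neg_of_add_eq_zero_right h1
  have hnorm := congrArg norm hVW
  rw [norm_mul, Quaternion.norm_coe, Real.norm_eq_abs, abs_neg,
    abs_of_nonneg (by linarith)] at hnorm
  have hmul : ‖p.2.1‖*‖p.2.2‖ = r/2 := by linarith
  have hsq : (‖p.2.1‖+‖p.2.2‖)^2 = 1 := by nlinarith [h2, hmul]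
  have hsum : ‖p.2.1‖+‖p.2.2‖ = 1 :=
    real_eq_one_of_sq (by positivity) hsq
  have hc : -(1/2*r) = -(‖p.2.1‖*‖p.2.2‖) := by rw [hmul]; ring
  exact ⟨by rw [hVW, hc], hmul, hsum⟩

def fwdE (p : (Fin m → ℂ) × Quaternion ℝ × Quaternion ℝ) : Esp m :=
  (WithLp.equiv 2 _).symm
    ((WithLp.equiv 2 _).symm
        (Sum.elim (fun k => Real.sqrt 2 * (p.1 k).re) fun k => Real.sqrt 2 * (p.1 k).im),
      (WithLp.equiv 2 _).symm fun _ => ‖p.2.1‖ - ‖p.2.2‖)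

lemma sqrt_two_sq : Real.sqrt 2 ^ 2 = 2 := Real.sq_sqrt (by norm_num)

lemma fwdE_norm_sq (p : (Fin m → ℂ) × Quaternion ℝ × Quaternion ℝ) :
    ‖fwdE p‖^2 = 2*(∑ k, ‖p.1 k‖^2) + (‖p.2.1‖-‖p.2.2‖)^2 := by
  rw [show fwdE p = ((WithLp.equiv 2 _).symm
    ((WithLp.equiv 2 _).symm
        (Sum.elim (fun k => Real.sqrt 2 * (p.1 k).re) fun k => Real.sqrt 2 * (p.1 k).im),
      (WithLp.equiv 2 _).symm fun _ => ‖p.2.1‖ - ‖p.2.2‖)) from rfl,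
    WithLp.prod_norm_sq_eq_of_L2]
  simp only [WithLp.equiv_symm_apply, WithLp.toLp_fst, WithLp.toLp_snd]
  rw [eucl_norm_sq, eucl_norm_sq]
  simp only [PiLp.toLp_apply]
  rw [Fintype.sum_sum_type]
  simp only [Sum.elim_inl, Sum.elim_inr]
  rw [Fin.sum_univ_one, ← Finset.sum_add_distrib, Finset.mul_sum]
  congr 1
  refine Finset.sum_congr rfl fun k _ => ?_
  rw [mul_pow, mul_pow, sqrt_two_sq, sq_abs_complex]
  ring

def fwdQ (p : (Fin m → ℂ) × Quaternion ℝ × Quaternion ℝ) : Quaternion ℝ := p.2.1 - star p.2.2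

lemma fwdQ_norm {p : (Fin m → ℂ) × Quaternion ℝ × Quaternion ℝ} (hp : p ∈ Yset m) :
    ‖fwdQ p‖ = 1 := by
  obtain ⟨hVW, hmul, hsum⟩ := Y_facts hp
  apply real_eq_one_of_sq (norm_nonneg _)
  rw [fwdQ, norm_sub_sq_real, Quaternion.inner_def, star_star, hVW]
  have : ((-(‖p.2.1‖ * ‖p.2.2‖) : ℝ) : Quaternion ℝ).re = -(‖p.2.1‖ * ‖p.2.2‖) := rfl
  rw [this]
  rw [Quaternion.norm_star]
  nlinarith [hsum]

lemma mem_sphere_fwdE {p : (Fin m → ℂ) × Quaternion ℝ × Quaternion ℝ} (hp : p ∈ Yset m) :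
    fwdE p ∈ sphere (0 : Esp m) 1 := by
  obtain ⟨hVW, hmul, hsum⟩ := Y_facts hp
  obtain ⟨h1, h2⟩ := hp
  rw [mem_sphere_zero_iff_norm]
  apply real_eq_one_of_sq (norm_nonneg _)
  rw [fwdE_norm_sq]
  nlinarith [hmul, h2]

def bwd (m : ℕ) (u : EuclideanSpace ℝ (Fin m ⊕ Fin m)) (t : ℝ) (q : Quaternion ℝ) :
    (Fin m → ℂ) × Quaternion ℝ × Quaternion ℝ :=
  (fun k => (↑(u (.inl k) / Real.sqrt 2) + ↑(u (.inr k) / Real.sqrt 2) * Complex.I),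
   ((1+t)/2) • q, (-((1-t)/2)) • star q)

lemma bwd_r (u : EuclideanSpace ℝ (Fin m ⊕ Fin m)) (t : ℝ) (q : Quaternion ℝ) :
    ∑ k, ‖(bwd m u t q).1 k‖^2 = (∑ j, u j ^2)/2 := by
  simp only [bwd, sq_abs_complex]
  simp only [Complex.add_re, Complex.add_im, Complex.ofReal_re, Complex.ofReal_im,
    Complex.mul_re, Complex.mul_im, Complex.I_re, Complex.I_im]
  rw [Fintype.sum_sum_type (f := fun j => u j ^ 2)]
  have h2 : (0:ℝ) < Real.sqrt 2 := Real.sqrt_pos.2 (by norm_num)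
  rw [← Finset.sum_add_distrib, Finset.sum_div]
  refine Finset.sum_congr rfl fun k _ => ?_
  simp only [mul_zero, zero_mul, mul_one, sub_zero, zero_add, add_zero]
  rw [div_pow, div_pow, sqrt_two_sq]
  ring

end YMain

noncomputable section YMain2

variable {m : ℕ}

lemma mem_bwd (u : EuclideanSpace ℝ (Fin m ⊕ Fin m)) (t : ℝ) (q : Quaternion ℝ)
    (hu : (∑ j, u j ^2) + t^2 = 1) (hq : ‖q‖ = 1) : bwd m u t q ∈ Yset m := by
  have hr := bwd_r u t q
  have hqq : q * star q = ((1:ℝ) : Quaternion ℝ) := by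
    rw [Quaternion.self_mul_star]
    congr 1
    rw [Quaternion.normSq_eq_norm_mul_self, hq, one_mul]
  have hVW : (bwd m u t q).2.1 * (bwd m u t q).2.2
      = ((-((1+t)/2*((1-t)/2)) : ℝ) : Quaternion ℝ) := by
    show (((1+t)/2) • q) * ((-((1-t)/2)) • star q) = _
    rw [smul_mul_assoc, mul_smul_comm, smul_smul, hqq, Quaternion.smul_coe]
    congr 1
    ring
  refine ⟨?_, ?_⟩
  · show (((1:ℝ)/2 * ∑ k, ‖(bwd m u t q).1 k‖^2 : ℝ) : Quaternion ℝ)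
      + (bwd m u t q).2.1 * (bwd m u t q).2.2 = 0
    rw [hVW, hr, ← Quaternion.coe_add]
    have hz : (1:ℝ)/2 * ((∑ j, u j ^2)/2) + (-((1+t)/2*((1-t)/2))) = 0 := by nlinarith [hu]
    rw [hz, Quaternion.coe_zero]
  · show (∑ k, ‖(bwd m u t q).1 k‖^2)
      + ‖((1+t)/2) • q‖^2 + ‖(-((1-t)/2)) • star q‖^2 = 1
    rw [hr, norm_smul, norm_smul, Quaternion.norm_star, hq, mul_one, mul_one,
      Real.norm_eq_abs, Real.norm_eq_abs, sq_abs, sq_abs]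
    nlinarith [hu]

lemma sphere_E_prop (y : Esp m) (hy : y ∈ sphere (0 : Esp m) 1) :
    (∑ j, y.fst j ^2) + (y.snd 0)^2 = 1 := by
  rw [mem_sphere_zero_iff_norm] at hy
  have h : ‖y‖^2 = 1 := by rw [hy]; norm_num
  rw [WithLp.prod_norm_sq_eq_of_L2, eucl_norm_sq, eucl_norm_sq, Fin.sum_univ_one] at h
  exact h

def coreHomeo (m : ℕ) :
    (Yset m) ≃ₜ (sphere (0 : Esp m) 1 × sphere (0 : Quaternion ℝ) 1) where
  toFun p := (⟨fwdE p.1, mem_sphere_fwdE p.2⟩,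
    ⟨fwdQ p.1, by rw [mem_sphere_zero_iff_norm]; exact fwdQ_norm p.2⟩)
  invFun u := ⟨bwd m (u.1 : Esp m).fst ((u.1 : Esp m).snd 0) (u.2 : Quaternion ℝ),
    mem_bwd _ _ _ (sphere_E_prop _ u.1.2)
      (mem_sphere_zero_iff_norm.mp u.2.2)⟩
  left_inv := by
    rintro ⟨⟨Z, V, W⟩, hp⟩
    obtain ⟨hVW, hmul, hsum⟩ := Y_facts hp
    dsimp only at hVW hmul hsum
    apply Subtype.ext
    have ha : ((1 + (‖V‖ - ‖W‖))/2 : ℝ) = ‖V‖ := by linarith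
    have hb : ((1 - (‖V‖ - ‖W‖))/2 : ℝ) = ‖W‖ := by linarith
    refine Prod.ext ?_ (Prod.ext ?_ ?_)
    · funext k
      show (↑(Real.sqrt 2 * (Z k).re / Real.sqrt 2)
        + ↑(Real.sqrt 2 * (Z k).im / Real.sqrt 2) * Complex.I) = Z k
      have hs : Real.sqrt 2 ≠ 0 := by positivity
      rw [mul_div_cancel_left₀ _ hs, mul_div_cancel_left₀ _ hs, Complex.re_add_im]
    · show ((1 + (‖V‖ - ‖W‖))/2) • (V - star W) = V
      rw [ha]
      exact quat_recover1 V W hVW hsum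
    · show (-((1 - (‖V‖ - ‖W‖))/2)) • star (V - star W) = W
      rw [hb]
      exact quat_recover2 V W hVW hsum
  right_inv := by
    rintro ⟨⟨y, hy⟩, ⟨q, hq'⟩⟩
    have hq : ‖q‖ = 1 := mem_sphere_zero_iff_norm.mp hq'
    have hyP := sphere_E_prop y hy
    have hsumnn : (0:ℝ) ≤ ∑ j, y.fst j ^2 :=
      Finset.sum_nonneg fun j _ => sq_nonneg _
    have ht1 : (y.snd 0)^2 ≤ 1 := by nlinarith [hyP, hsumnn]
    have ha0 : (0:ℝ) ≤ (1 + y.snd 0)/2 := by nlinarith [sq_nonneg (1 + y.snd 0), ht1]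
    have hb0 : (0:ℝ) ≤ (1 - y.snd 0)/2 := by nlinarith [sq_nonneg (1 - y.snd 0), ht1]
    refine Prod.ext (Subtype.ext ?_) (Subtype.ext ?_)
    · show fwdE (bwd m y.fst (y.snd 0) q) = y
      refine WithLp.ofLp_injective 2 (Prod.ext ?_ ?_)
      · refine PiLp.ext fun j => ?_
        cases j with
        | inl k =>
          show Real.sqrt 2 * ((↑(y.fst (.inl k)/Real.sqrt 2)
            + ↑(y.fst (.inr k)/Real.sqrt 2) * Complex.I : ℂ)).re = y.fst (.inl k)
          have hs : Real.sqrt 2 ≠ 0 := by positivity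
          simp only [Complex.add_re, Complex.ofReal_re, Complex.mul_re, Complex.I_re,
            Complex.I_im, Complex.ofReal_im, mul_zero, zero_mul, mul_one, sub_zero, zero_sub,
            add_zero, zero_add, mul_zero]
          field_simp
        | inr k =>
          show Real.sqrt 2 * ((↑(y.fst (.inl k)/Real.sqrt 2)
            + ↑(y.fst (.inr k)/Real.sqrt 2) * Complex.I : ℂ)).im = y.fst (.inr k)
          have hs : Real.sqrt 2 ≠ 0 := by positivity
          simp only [Complex.add_im, Complex.ofReal_im, Complex.mul_im, Complex.I_re,
            Complex.I_im, Complex.ofReal_re, mul_zero, zero_mul, mul_one, sub_zero, zero_sub,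
            add_zero, zero_add]
          field_simp
      · refine PiLp.ext fun i => ?_
        have hi : i = 0 := Subsingleton.elim _ _
        subst hi
        show ‖((1 + y.snd 0)/2) • q‖ - ‖(-((1 - y.snd 0)/2)) • star q‖ = y.snd 0
        rw [norm_smul, norm_smul, Quaternion.norm_star, hq, mul_one, mul_one,
          Real.norm_eq_abs, Real.norm_eq_abs, abs_of_nonneg ha0, abs_neg, abs_of_nonneg hb0]
        ring
    · show ((1 + y.snd 0)/2) • q - star ((-((1 - y.snd 0)/2)) • star q) = q
      rw [Quaternion.star_smul, star_star, ← sub_smul]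
      have hone : (1 + y.snd 0)/2 - (-((1 - y.snd 0)/2)) = 1 := by ring
      rw [hone, one_smul]
  continuous_toFun := by
    have hc1 : Continuous fun p : Yset m => (p : (Fin m → ℂ) × Quaternion ℝ × Quaternion ℝ).1 :=
      continuous_fst.comp continuous_subtype_val
    have hcV : Continuous fun p : Yset m =>
        (p : (Fin m → ℂ) × Quaternion ℝ × Quaternion ℝ).2.1 :=
      continuous_fst.comp (continuous_snd.comp continuous_subtype_val)
    have hcW : Continuous fun p : Yset m =>
        (p : (Fin m → ℂ) × Quaternion ℝ × Quaternion ℝ).2.2 :=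
      continuous_snd.comp (continuous_snd.comp continuous_subtype_val)
    refine Continuous.prodMk (Continuous.subtype_mk ?_ _) (Continuous.subtype_mk ?_ _)
    · refine (WithLp.prod_continuous_toLp _ _ _).comp (Continuous.prodMk ?_ ?_)
      · refine (PiLp.continuous_toLp _ _).comp (continuous_pi fun j => ?_)
        cases j with
        | inl k =>
          exact continuous_const.mul (Complex.continuous_re.comp ((continuous_apply k).comp hc1))
        | inr k =>
          exact continuous_const.mul (Complex.continuous_im.comp ((continuous_apply k).comp hc1))
      · exact (PiLp.continuous_toLp _ _).comp
          (continuous_pi fun _ => hcV.norm.sub hcW.norm)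
    · exact hcV.sub (continuous_star.comp hcW)
  continuous_invFun := by
    set X := sphere (0 : Esp m) 1 × sphere (0 : Quaternion ℝ) 1
    have hy : Continuous fun u : X => (u.1 : Esp m) :=
      continuous_subtype_val.comp continuous_fst
    have hyfst : Continuous fun u : X => (u.1 : Esp m).fst :=
      continuous_fst.comp ((WithLp.prod_continuous_ofLp _ _ _).comp hy)
    have hysnd : Continuous fun u : X => (u.1 : Esp m).snd :=
      continuous_snd.comp ((WithLp.prod_continuous_ofLp _ _ _).comp hy)
    have hcoord : ∀ j, Continuous fun u : X => (u.1 : Esp m).fst j := fun j =>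
      (continuous_apply j).comp ((PiLp.continuous_ofLp _ _).comp hyfst)
    have ht : Continuous fun u : X => (u.1 : Esp m).snd 0 :=
      (continuous_apply 0).comp ((PiLp.continuous_ofLp _ _).comp hysnd)
    have hq : Continuous fun u : X => (u.2 : Quaternion ℝ) :=
      continuous_subtype_val.comp continuous_snd
    refine Continuous.subtype_mk (Continuous.prodMk ?_ (Continuous.prodMk ?_ ?_)) _
    · refine continuous_pi fun k => ?_
      exact (Complex.continuous_ofReal.comp ((hcoord (.inl k)).div_const _)).add
        ((Complex.continuous_ofReal.comp ((hcoord (.inr k)).div_const _)).mul continuous_const)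
    · exact ((continuous_const.add ht).div_const 2).smul hq
    · exact (((continuous_const.sub ht).div_const 2).neg).smul (continuous_star.comp hq)

def idxEquiv (m : ℕ) : ((Fin m ⊕ Fin m) ⊕ Fin 1) ≃ Fin (2*m+1) :=
  ((Equiv.sumCongr finSumFinEquiv (Equiv.refl (Fin 1))).trans finSumFinEquiv).trans
    (finCongr (by omega))

def L1 (m : ℕ) : Esp m ≃ₗᵢ[ℝ] EuclideanSpace ℝ (Fin (2*m+1)) :=
  ((EuclideanSpace.basisFun (Fin m ⊕ Fin m) ℝ).prod
    (EuclideanSpace.basisFun (Fin 1) ℝ)).repr.trans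
    (LinearIsometryEquiv.piLpCongrLeft 2 ℝ ℝ (idxEquiv m))

end YMain2

open Quaternion

/-- When all `λ_k` equal `1/2` (so the origin is not in their convex hull), the
intersection of quadrics `Y` is homeomorphic to `S^{2m} × S³`. -/
theorem Y_homeomorphic_sphere_prod (m : ℕ) (hm : 1 ≤ m) :
    Nonempty
      (({p : (Fin m → ℂ) × Quaternion ℝ × Quaternion ℝ |
          ((((1 : ℝ) / 2) * ∑ k, ‖p.1 k‖ ^ 2 : ℝ) : Quaternion ℝ)
            + p.2.1 * p.2.2 = 0 ∧
          (∑ k, ‖p.1 k‖ ^ 2) + ‖p.2.1‖ ^ 2 + ‖p.2.2‖ ^ 2 = 1} :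
        Set ((Fin m → ℂ) × Quaternion ℝ × Quaternion ℝ)) ≃ₜ
      (Metric.sphere (0 : EuclideanSpace ℝ (Fin (2 * m + 1))) 1 ×
        Metric.sphere (0 : EuclideanSpace ℝ (Fin 4)) 1)) := by
  exact ⟨(coreHomeo m).trans ((sphereHomeo (L1 m)).prodCongr
    (sphereHomeo Quaternion.linearIsometryEquivTuple))⟩
end
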